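/- Let N be a node set of size n+1 with n ≥ 2, and let the random nomination profile x be drawn from an opinion poll distribution (each node independently draws its set of outgoing edges from an arbitrary distribution). Let j* ∈ N be a node maximizing the expected in-degree E[d_j(x)]. Then E[Δ(x)] ≤ E[d_{j*}(x)] + 3 + √(n·ln n); in particular, the constant mechanism that always returns j* has expected additive approximation E[Δ(x) − d_{j*}(x)] at most 3 + √(n·ln n). -/

import Mathlib

open Finset

/-- In-degree of node `j` in the nomination profile `x` (no self-votes counted). -/
def indeg {N : Type*} [Fintype N] [DecidableEq N] (x : N → N → Bool) (j : N) : ℕ :=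
  ((Finset.univ.erase j).filter (fun i => x i j)).card

/-- The maximum in-degree `Δ(x)` of the nomination profile `x`. -/
def maxdeg {N : Type*} [Fintype N] [DecidableEq N] (x : N → N → Bool) : ℕ :=
  Finset.univ.sup (indeg x)

/-- Probability of the profile `x` in the opinion poll model, where node `i`
draws its row of outgoing edges according to the distribution `P i`. -/
noncomputable def oppWeight {N : Type*} [Fintype N] [DecidableEq N]
    (P : N → (N → Bool) → ℝ) (x : N → N → Bool) : ℝ :=
  ∏ i, P i (x i)

open Real

set_option maxHeartbeats 1000000 in
private lemma polyCert (x C A B : ℝ) (hx0 : 0 ≤ x) (hx1 : x ≤ 3/4)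
    (hC : C = x + 13/18*x^2 + 4/9*x^3) (hA : A = C*(4+C)) (hB : B = 8+4*C) :
    A^2 * (2*A + 3*B) ≤ x^2 * (A+B)^2 * B := by
  subst hA hB hC
  have h34 : (0:ℝ) ≤ 3/4 - x := by linarith
  nlinarith [mul_nonneg (pow_nonneg hx0 0) (pow_nonneg h34 18), mul_nonneg (pow_nonneg hx0 1) (pow_nonneg h34 17), mul_nonneg (pow_nonneg hx0 2) (pow_nonneg h34 16), mul_nonneg (pow_nonneg hx0 3) (pow_nonneg h34 15), mul_nonneg (pow_nonneg hx0 4) (pow_nonneg h34 14), mul_nonneg (pow_nonneg hx0 5) (pow_nonneg h34 13), mul_nonneg (pow_nonneg hx0 6) (pow_nonneg h34 12), mul_nonneg (pow_nonneg hx0 7) (pow_nonneg h34 11), mul_nonneg (pow_nonneg hx0 8) (pow_nonneg h34 10), mul_nonneg (pow_nonneg hx0 9) (pow_nonneg h34 9), mul_nonneg (pow_nonneg hx0 10) (pow_nonneg h34 8), mul_nonneg (pow_nonneg hx0 11) (pow_nonneg h34 7), mul_nonneg (pow_nonneg hx0 12) (pow_nonneg h34 6), mul_nonneg (pow_nonneg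 hx0 13) (pow_nonneg h34 5), mul_nonneg (pow_nonneg hx0 14) (pow_nonneg h34 4), mul_nonneg (pow_nonneg hx0 15) (pow_nonneg h34 3), mul_nonneg (pow_nonneg hx0 16) (pow_nonneg h34 2), mul_nonneg (pow_nonneg hx0 17) (pow_nonneg h34 1), mul_nonneg (pow_nonneg hx0 18) (pow_nonneg h34 0)]

set_option maxHeartbeats 1000000 in
private lemma mgf_bound {p lam : ℝ} (hp0 : 0 ≤ p) (hp1 : p ≤ 1)
    (hl0 : 0 ≤ lam) (hl1 : lam ≤ 3/2) :
    1 + p * (exp lam - 1) ≤ exp (lam * p + lam^2/4) := by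
  rcases eq_or_lt_of_le hl0 with h | hl0'
  · simp [← h]
  set x := lam / 2 with hxdef
  have hx0 : 0 < x := by positivity
  have hx1 : x ≤ 3/4 := by rw [hxdef]; linarith
  have hU : exp x ≤ 1 + x + x^2/2 + (2/9)*x^3 := by
    have h := Real.exp_bound' hx0.le (by linarith : x ≤ 1) (n := 3) (by norm_num)
    calc exp x ≤ (∑ m ∈ Finset.range 3, x ^ m / m.factorial) + x ^ 3 * (3+1) / (Nat.factorial 3 * 3) := h
    _ = 1 + x + x^2/2 + (2/9)*x^3 := by
        simp [Finset.sum_range_succ, Nat.factorial]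
        ring
  have hexplam : exp lam = exp x * exp x := by
    rw [← Real.exp_add]; congr 1; rw [hxdef]; ring
  set c := exp lam - 1 with hcdef
  have hc : lam ≤ c := by
    have := Real.add_one_le_exp lam
    rw [hcdef]; linarith
  have hc0 : 0 < c := lt_of_lt_of_le hl0' hc
  set t := c / lam with htdef
  have ht1 : 1 ≤ t := (le_div_iff₀ hl0').2 (by linarith)
  have ht0 : 0 < t := lt_of_lt_of_le one_pos ht1
  set C := x + 13/18*x^2 + 4/9*x^3 with hCdef
  have hC0 : 0 ≤ C := by rw [hCdef]; positivity
  have htC : t - 1 ≤ C := by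
    have hEx0 := Real.exp_pos x
    have hE1 : (1:ℝ) + x ≤ exp x := by nlinarith [Real.add_one_le_exp x]
    have hsq : exp x * exp x ≤ (1 + x + x^2/2 + (2/9)*x^3)^2 := by nlinarith
    have hlx : lam = 2*x := by rw [hxdef]; ring
    have hclam : c ≤ lam + lam * C := by
      rw [hcdef, hexplam, hlx, hCdef]
      nlinarith [pow_nonneg hx0.le 3, pow_nonneg hx0.le 4, pow_nonneg hx0.le 5,
        pow_nonneg hx0.le 6,
        mul_nonneg (pow_nonneg hx0.le 3) (by linarith : (0:ℝ) ≤ 3/4 - x),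
        mul_nonneg (pow_nonneg hx0.le 4) (by linarith : (0:ℝ) ≤ 3/4 - x)]
    have ht' : t ≤ 1 + C := by
      rw [htdef, div_le_iff₀ hl0']
      calc c ≤ lam + lam * C := hclam
      _ = (1 + C) * lam := by ring
    linarith
  set v := Real.sqrt t with hvdef
  have hv1 : 1 ≤ v := by
    rw [hvdef, show (1:ℝ) = Real.sqrt 1 by simp]
    exact Real.sqrt_le_sqrt ht1
  have hv2 : v^2 = t := Real.sq_sqrt ht0.le
  have hv0 : 0 < v := by linarith
  set u := v - 1 with hudef
  have hu0 : 0 ≤ u := by linarith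
  set A := C*(4+C) with hAdef
  set B := 8+4*C with hBdef
  have hB0 : (0:ℝ) < B := by rw [hBdef]; linarith
  have hA0 : (0:ℝ) ≤ A := by rw [hAdef]; nlinarith
  have huB : u * B ≤ A := by
    have h1 : (1+u)^2 ≤ 1 + C := by
      have h1u : (1+u)^2 = t := by rw [hudef, ← hv2]; ring
      linarith
    have h2 : ((1+u)*B)^2 ≤ (A+B)^2 := by
      have hident : (A+B)^2 - (1+C)*B^2 = C^4 := by rw [hAdef, hBdef]; ring
      have hm := mul_le_mul_of_nonneg_right h1 (sq_nonneg B)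
      have hexp : ((1+u)*B)^2 = (1+u)^2*B^2 := by ring
      have hc4 : (0:ℝ) ≤ C^4 := by positivity
      linarith
    have h3 : (1+u)*B ≤ A+B := by
      have := le_of_pow_le_pow_left₀ (two_ne_zero) (by linarith : (0:ℝ) ≤ A + B) h2
      exact this
    nlinarith
  have key : 2*v^3 - 3*v^2 + 1 ≤ x^2 * v^2 := by
    have hs1 : u^2*(2*u+3)*B ≤ u^2*(2*A+3*B) := by
      have hm := mul_le_mul_of_nonneg_left huB (sq_nonneg u)
      nlinarith [mul_nonneg (sq_nonneg u) hB0.le]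
    have hs2 : (u*(A+B))^2 ≤ (A*(1+u))^2 := by
      have h4 : u*(A+B) ≤ A*(1+u) := by nlinarith
      have h5 : 0 ≤ u*(A+B) := by positivity
      nlinarith
    have hs3 := polyCert x C A B hx0.le hx1 hCdef hAdef hBdef
    have hABpos : (0:ℝ) < (A+B)^2 := by positivity
    have hchain : u^2*(2*u+3) * (B*(A+B)^2) ≤ x^2*(1+u)^2 * (B*(A+B)^2) := by
      calc u^2*(2*u+3) * (B*(A+B)^2) = (u^2*(2*u+3)*B)*(A+B)^2 := by ring
      _ ≤ (u^2*(2*A+3*B))*(A+B)^2 := mul_le_mul_of_nonneg_right hs1 hABpos.le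
      _ = (u*(A+B))^2 * (2*A+3*B) := by ring
      _ ≤ (A*(1+u))^2 * (2*A+3*B) := mul_le_mul_of_nonneg_right hs2 (by positivity : (0:ℝ) ≤ 2*A+3*B)
      _ = (A^2*(2*A+3*B)) * (1+u)^2 := by ring
      _ ≤ (x^2*(A+B)^2*B) * (1+u)^2 := mul_le_mul_of_nonneg_right hs3 (sq_nonneg _)
      _ = x^2*(1+u)^2 * (B*(A+B)^2) := by ring
    have hBpos : (0:ℝ) < B*(A+B)^2 := by positivity
    have hkey' : u^2*(2*u+3) ≤ x^2*(1+u)^2 := le_of_mul_le_mul_right hchain hBpos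
    have e1 : u^2*(2*u+3) = 2*v^3 - 3*v^2 + 1 := by rw [hudef]; ring
    have e2 : x^2*(1+u)^2 = x^2*v^2 := by rw [hudef]; ring
    linarith
  -- now assemble the log inequality
  have h1pc : (0:ℝ) < 1 + p * c := by nlinarith
  have hstep3 : 2*v - 3 + 1/v^2 ≤ x^2 := by
    have hv2pos : (0:ℝ) < v^2 := by positivity
    rw [← mul_le_mul_iff_of_pos_right hv2pos]
    have : (2*v - 3 + 1/v^2) * v^2 = 2*v^3 - 3*v^2 + 1 := by field_simp
    rw [this]; exact key
  have hlogt : Real.log t ≤ 2*v - 2 := by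
    have : Real.log t = 2 * Real.log v := by rw [← hv2, Real.log_pow]; push_cast; ring
    have hlv := Real.log_le_sub_one_of_pos hv0
    linarith
  have hlog1 : Real.log (1 + p*c) ≤ Real.log t + ((1+p*c)/t - 1) := by
    have hd := Real.log_le_sub_one_of_pos (by positivity : (0:ℝ) < (1+p*c)/t)
    rw [Real.log_div (by linarith) (by linarith)] at hd
    linarith
  have hfrac : (1+p*c)/t = 1/v^2 + p * lam := by
    rw [hv2, htdef]
    field_simp
  have hlogfinal : Real.log (1 + p*c) ≤ lam * p + lam^2/4 := by
    have hx2 : x^2 = lam^2/4 := by rw [hxdef]; ring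
    rw [hfrac] at hlog1
    nlinarith [hlog1, hlogt, hstep3]
  calc 1 + p * c = exp (Real.log (1 + p*c)) := (Real.exp_log h1pc).symm
  _ ≤ exp (lam * p + lam^2/4) := Real.exp_le_exp.2 hlogfinal


section plumbing
variable {N : Type*} [Fintype N] [DecidableEq N] (P : N → (N → Bool) → ℝ)

private lemma factor_eq (g : N → (N → Bool) → ℝ) :
    ∑ x : N → N → Bool, oppWeight P x * ∏ i, g i (x i)
      = ∏ i, ∑ f : N → Bool, P i f * g i f := by
  rw [Fintype.prod_sum (fun i f => P i f * g i f)]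
  exact Finset.sum_congr rfl fun x _ => by rw [oppWeight, ← Finset.prod_mul_distrib]

private lemma weight_sum (hP1 : ∀ i, ∑ f : N → Bool, P i f = 1) :
    ∑ x : N → N → Bool, oppWeight P x = 1 := by
  have h := factor_eq P (fun _ _ => (1:ℝ))
  simpa [hP1] using h

private lemma indeg_cast (x : N → N → Bool) (j : N) :
    (indeg x j : ℝ) = ∑ i ∈ Finset.univ.erase j, (if x i j then (1:ℝ) else 0) := by
  rw [indeg, Finset.card_filter]
  push_cast
  exact Finset.sum_congr rfl fun i _ => by split <;> simp

private lemma exp_indeg_prod (x : N → N → Bool) (j : N) (lam : ℝ) :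
    exp (lam * (indeg x j : ℝ))
      = ∏ i, (if i = j then 1 else exp (lam * (if x i j then (1:ℝ) else 0))) := by
  rw [← Finset.prod_erase_mul Finset.univ _ (Finset.mem_univ j)]
  rw [if_pos rfl, mul_one]
  rw [indeg_cast, Finset.mul_sum, Real.exp_sum]
  exact Finset.prod_congr rfl fun i hi => by rw [if_neg (Finset.ne_of_mem_erase hi)]

end plumbing

section plumbing2
variable {N : Type*} [Fintype N] [DecidableEq N] (P : N → (N → Bool) → ℝ)

private noncomputable def qq (i j : N) : ℝ := ∑ f : N → Bool, (if f j then P i f else 0)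

private lemma qq_nonneg (hP0 : ∀ i f, 0 ≤ P i f) (i j : N) : 0 ≤ qq P i j :=
  Finset.sum_nonneg fun f _ => by split; exacts [hP0 i f, le_refl 0]

private lemma qq_le_one (hP0 : ∀ i f, 0 ≤ P i f) (hP1 : ∀ i, ∑ f : N → Bool, P i f = 1)
    (i j : N) : qq P i j ≤ 1 := by
  rw [← hP1 i]
  exact Finset.sum_le_sum fun f _ => by split; exacts [le_refl _, hP0 i f]

private lemma S_val (hP1 : ∀ i, ∑ f : N → Bool, P i f = 1) (i j : N) (lam : ℝ) :
    ∑ f : N → Bool, P i f * exp (lam * (if f j then (1:ℝ) else 0))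
      = 1 + qq P i j * (exp lam - 1) := by
  have : ∀ f : N → Bool, P i f * exp (lam * (if f j then (1:ℝ) else 0))
      = P i f + (if f j then P i f else 0) * (exp lam - 1) := by
    intro f
    by_cases h : f j <;> simp [h] <;> ring
  rw [Finset.sum_congr rfl fun f _ => this f, Finset.sum_add_distrib, hP1, ← Finset.sum_mul, qq]

private lemma mu_eq (hP1 : ∀ i, ∑ f : N → Bool, P i f = 1) (j : N) :
    ∑ x : N → N → Bool, oppWeight P x * (indeg x j : ℝ)
      = ∑ i ∈ Finset.univ.erase j, qq P i j := by
  have h1 : ∀ x : N → N → Bool, oppWeight P x * (indeg x j : ℝ)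
      = ∑ i ∈ Finset.univ.erase j, oppWeight P x * (if x i j then (1:ℝ) else 0) := by
    intro x; rw [indeg_cast, Finset.mul_sum]
  rw [Finset.sum_congr rfl fun x _ => h1 x, Finset.sum_comm]
  refine Finset.sum_congr rfl fun i hi => ?_
  have hfac := factor_eq P (fun k f => if k = i then (if f j then (1:ℝ) else 0) else 1)
  have h2 : ∀ x : N → N → Bool,
      (∏ k, (if k = i then (if x k j then (1:ℝ) else 0) else 1)) = (if x i j then (1:ℝ) else 0) := by
    intro x
    rw [Finset.prod_ite_eq' Finset.univ i (fun k => if x k j then (1:ℝ) else 0), if_pos (Finset.mem_univ i)]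
  rw [← Finset.sum_congr rfl fun x _ => by rw [h2 x]] at hfac
  rw [hfac, Finset.prod_eq_single i (fun k _ hk => by simp [hk, hP1 k]) (by simp)]
  simp only [if_pos rfl, qq, mul_ite, mul_one, mul_zero]
  simp

end plumbing2

section plumbing3
variable {N : Type*} [Fintype N] [DecidableEq N] (P : N → (N → Bool) → ℝ)

private lemma moment_bound (hP0 : ∀ i f, 0 ≤ P i f) (hP1 : ∀ i, ∑ f : N → Bool, P i f = 1)
    {lam : ℝ} (hl0 : 0 ≤ lam) (hl1 : lam ≤ 3/2) (j : N) :
    ∑ x : N → N → Bool, oppWeight P x * exp (lam * (indeg x j : ℝ))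
      ≤ exp (lam * (∑ x : N → N → Bool, oppWeight P x * (indeg x j : ℝ))
          + ((Fintype.card N : ℝ) - 1) * lam^2/4) := by
  have h0 : ∑ x : N → N → Bool, oppWeight P x * exp (lam * (indeg x j : ℝ))
      = ∏ i, ∑ f : N → Bool, P i f * (if i = j then 1 else exp (lam * (if f j then (1:ℝ) else 0))) := by
    rw [← factor_eq P (fun i f => if i = j then 1 else exp (lam * (if f j then (1:ℝ) else 0)))]
    exact Finset.sum_congr rfl fun x _ => by rw [exp_indeg_prod]
  rw [h0, ← Finset.prod_erase_mul Finset.univ _ (Finset.mem_univ j)]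
  have hSj : ∑ f : N → Bool, P j f * (if j = j then 1 else exp (lam * (if f j then (1:ℝ) else 0))) = 1 := by
    simp [hP1 j]
  rw [hSj, mul_one]
  have hexplam1 : (1:ℝ) ≤ exp lam := by
    rw [show (1:ℝ) = exp 0 by simp]; exact exp_le_exp.2 hl0
  have hstep : ∀ i ∈ Finset.univ.erase j,
      ∑ f : N → Bool, P i f * (if i = j then 1 else exp (lam * (if f j then (1:ℝ) else 0)))
        ≤ exp (lam * qq P i j + lam^2/4) := by
    intro i hi
    have hij := Finset.ne_of_mem_erase hi
    have : ∑ f : N → Bool, P i f * (if i = j then 1 else exp (lam * (if f j then (1:ℝ) else 0)))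
        = 1 + qq P i j * (exp lam - 1) := by
      rw [Finset.sum_congr rfl fun f _ => by rw [if_neg hij], S_val P hP1]
    rw [this]
    exact mgf_bound (qq_nonneg P hP0 i j) (qq_le_one P hP0 hP1 i j) hl0 hl1
  calc ∏ i ∈ Finset.univ.erase j, ∑ f : N → Bool,
        P i f * (if i = j then 1 else exp (lam * (if f j then (1:ℝ) else 0)))
      ≤ ∏ i ∈ Finset.univ.erase j, exp (lam * qq P i j + lam^2/4) := by
        refine Finset.prod_le_prod (fun i hi => ?_) hstep
        have : ∑ f : N → Bool, P i f * (if i = j then 1 else exp (lam * (if f j then (1:ℝ) else 0)))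
            = 1 + qq P i j * (exp lam - 1) := by
          rw [Finset.sum_congr rfl fun f _ => by rw [if_neg (Finset.ne_of_mem_erase hi)], S_val P hP1]
        rw [this]
        nlinarith [qq_nonneg P hP0 i j]
    _ = exp (lam * (∑ x : N → N → Bool, oppWeight P x * (indeg x j : ℝ))
          + ((Fintype.card N : ℝ) - 1) * lam^2/4) := by
        rw [← Real.exp_sum, Finset.sum_add_distrib, Finset.sum_const,
          Finset.card_erase_of_mem (Finset.mem_univ j), Finset.card_univ,
          ← Finset.mul_sum, mu_eq P hP1 j]
        congr 1
        have hcard : (1:ℕ) ≤ Fintype.card N := Fintype.card_pos_iff.2 ⟨j⟩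
        rw [nsmul_eq_mul, Nat.cast_sub hcard]
        push_cast
        ring

end plumbing3

private lemma loglemma1 (n : ℕ) (hn : 2 ≤ n) : Real.log ((n:ℝ)+1) ≤ 9*(n:ℝ)/16 := by
  rcases Nat.lt_or_ge n 3 with h | h
  · have hn2 : n = 2 := by omega
    subst hn2
    have h3 : ((2:ℕ):ℝ) + 1 = 3 := by norm_num
    have h98 : 9*((2:ℕ):ℝ)/16 = 9/8 := by norm_num
    rw [h3, h98, Real.log_le_iff_le_exp (by norm_num)]
    have hq : (1:ℝ) + 9/16 + (9/16)^2/2 + (9/16)^3/6 ≤ exp (9/16) := by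
      have h := Real.sum_le_exp_of_nonneg (by norm_num : (0:ℝ) ≤ 9/16) 4
      calc (1:ℝ) + 9/16 + (9/16)^2/2 + (9/16)^3/6
          = ∑ i ∈ Finset.range 4, (9/16:ℝ)^i / i.factorial := by
            norm_num [Finset.sum_range_succ, Nat.factorial]
        _ ≤ exp (9/16) := h
    have he : exp (9/8) = exp (9/16) * exp (9/16) := by
      rw [← Real.exp_add]; norm_num
    have h0 : (0:ℝ) < exp (9/16) := exp_pos _
    calc (3:ℝ) ≤ ((1:ℝ) + 9/16 + (9/16)^2/2 + (9/16)^3/6)^2 := by norm_num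
      _ ≤ exp (9/16) * exp (9/16) := by nlinarith
      _ = exp (9/8) := by rw [← Real.exp_add]; norm_num
  · have hn3 : (3:ℝ) ≤ n := by exact_mod_cast h
    have hpos : (0:ℝ) < ((n:ℝ)+1)/4 := by linarith
    have hlog := Real.log_le_sub_one_of_pos hpos
    have hdiv : Real.log (((n:ℝ)+1)/4) = Real.log ((n:ℝ)+1) - Real.log 4 := by
      rw [Real.log_div (by linarith) (by norm_num)]
    have h4 : Real.log 4 = 2 * Real.log 2 := by
      rw [show (4:ℝ) = 2^2 by norm_num, Real.log_pow]; push_cast; ring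
    have h2 := Real.log_two_lt_d9
    rw [hdiv, h4] at hlog
    linarith

private lemma loglemma2 (n : ℕ) (hn : 2 ≤ n) :
    (n:ℝ) * Real.log ((n:ℝ)+1) ≤ (n:ℝ) * Real.log n + 1 := by
  have hn2 : (2:ℝ) ≤ n := by exact_mod_cast hn
  have hpos : (0:ℝ) < ((n:ℝ)+1)/n := by positivity
  have hlog := Real.log_le_sub_one_of_pos hpos
  have hdiv : Real.log (((n:ℝ)+1)/n) = Real.log ((n:ℝ)+1) - Real.log n := by
    rw [Real.log_div (by linarith) (by linarith)]
  rw [hdiv] at hlog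
  have hsub : ((n:ℝ)+1)/n - 1 = 1/n := by field_simp; ring
  rw [hsub] at hlog
  have := mul_le_mul_of_nonneg_left hlog (by linarith : (0:ℝ) ≤ n)
  have hne : (n:ℝ) ≠ 0 := by linarith
  calc (n:ℝ) * Real.log ((n:ℝ)+1) = n * Real.log n + n * (Real.log ((n:ℝ)+1) - Real.log n) := by ring
    _ ≤ n * Real.log n + n * (1/n) := by linarith
    _ = n * Real.log n + 1 := by field_simp

set_option maxHeartbeats 1600000 in
/-- For opinion poll inputs on `n+1` nodes (`n ≥ 2`), if `j*` is a node of maximum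
expected in-degree, then `E[Δ(x)] ≤ E[d_{j*}(x)] + 3 + √(n·ln n)`; in particular the
constant mechanism returning `j*` has expected additive approximation at most
`3 + √(n·ln n)`. -/
theorem stmt_1 (n : ℕ) (hn : 2 ≤ n) (P : Fin (n + 1) → (Fin (n + 1) → Bool) → ℝ)
    (hP0 : ∀ i f, 0 ≤ P i f)
    (hP1 : ∀ i, ∑ f : Fin (n + 1) → Bool, P i f = 1)
    (hPself : ∀ i f, f i = true → P i f = 0)
    (jstar : Fin (n + 1))
    (hjstar : ∀ j : Fin (n + 1),
      (∑ x : Fin (n + 1) → Fin (n + 1) → Bool, oppWeight P x * (indeg x j : ℝ))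
        ≤ ∑ x : Fin (n + 1) → Fin (n + 1) → Bool, oppWeight P x * (indeg x jstar : ℝ)) :
    ((∑ x : Fin (n + 1) → Fin (n + 1) → Bool, oppWeight P x * (maxdeg x : ℝ))
      ≤ (∑ x : Fin (n + 1) → Fin (n + 1) → Bool, oppWeight P x * (indeg x jstar : ℝ))
        + 3 + Real.sqrt (n * Real.log n)) ∧
    ((∑ x : Fin (n + 1) → Fin (n + 1) → Bool,
        oppWeight P x * ((maxdeg x : ℝ) - (indeg x jstar : ℝ)))
      ≤ 3 + Real.sqrt (n * Real.log n)) := by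
  have hw0 : ∀ x : Fin (n+1) → Fin (n+1) → Bool, 0 ≤ oppWeight P x :=
    fun x => Finset.prod_nonneg fun i _ => hP0 i (x i)
  have hw1 := weight_sum P hP1
  have hn2 : (2:ℝ) ≤ (n:ℝ) := by exact_mod_cast hn
  have hn0 : (0:ℝ) < n := by linarith
  set L := Real.log ((n:ℝ)+1) with hLdef
  have hL0 : 0 < L := Real.log_pos (by linarith)
  set sn := Real.sqrt n with hsndef
  set sL := Real.sqrt L with hsLdef
  have hsn : sn^2 = n := Real.sq_sqrt hn0.le
  have hsL : sL^2 = L := Real.sq_sqrt hL0.le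
  have hsn0 : 0 < sn := Real.sqrt_pos.2 hn0
  have hsL0 : 0 < sL := Real.sqrt_pos.2 hL0
  set lam := 2 * sL / sn with hlamdef
  have hlam0 : 0 < lam := by positivity
  have hlam32 : lam ≤ 3/2 := by
    have h916 : 16 * L ≤ 9 * n := by have := loglemma1 n hn; linarith
    have hsq : (4*sL)^2 ≤ (3*sn)^2 := by nlinarith
    have h43 : 4*sL ≤ 3*sn := by
      apply le_of_pow_le_pow_left₀ two_ne_zero (by positivity) hsq
    rw [hlamdef, div_le_iff₀ hsn0]; linarith
  -- expectations
  set ED := ∑ x : Fin (n + 1) → Fin (n + 1) → Bool, oppWeight P x * (maxdeg x : ℝ) with hEDdef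
  set MU := ∑ x : Fin (n + 1) → Fin (n + 1) → Bool, oppWeight P x * (indeg x jstar : ℝ) with hMUdef
  -- Jensen
  have hjen : exp (lam * ED) ≤ ∑ x : Fin (n+1) → Fin (n+1) → Bool,
      oppWeight P x * exp (lam * (maxdeg x : ℝ)) := by
    have h := convexOn_exp.map_sum_le (t := Finset.univ) (w := oppWeight P)
      (p := fun x => lam * (maxdeg x : ℝ)) (fun x _ => hw0 x) hw1 (fun x _ => Set.mem_univ _)
    simp only [smul_eq_mul] at h
    have harg : ∑ x : Fin (n+1) → Fin (n+1) → Bool, oppWeight P x * (lam * (maxdeg x : ℝ))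
        = lam * ED := by
      rw [hEDdef, Finset.mul_sum]
      exact Finset.sum_congr rfl fun x _ => by ring
    rwa [harg] at h
  have hpoint : ∀ x : Fin (n+1) → Fin (n+1) → Bool,
      exp (lam * (maxdeg x : ℝ)) ≤ ∑ j : Fin (n+1), exp (lam * (indeg x j : ℝ)) := by
    intro x
    obtain ⟨j0, _, hj0⟩ := Finset.exists_mem_eq_sup Finset.univ Finset.univ_nonempty (indeg x)
    have hmd : (maxdeg x : ℝ) = (indeg x j0 : ℝ) := by rw [maxdeg, hj0]
    rw [hmd]
    exact Finset.single_le_sum (f := fun j => exp (lam * (indeg x j : ℝ)))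
      (fun j _ => (exp_pos _).le) (Finset.mem_univ j0)
  have hswap : ∑ x : Fin (n+1) → Fin (n+1) → Bool,
        oppWeight P x * (∑ j : Fin (n+1), exp (lam * (indeg x j : ℝ)))
      = ∑ j : Fin (n+1), ∑ x : Fin (n+1) → Fin (n+1) → Bool,
          oppWeight P x * exp (lam * (indeg x j : ℝ)) := by
    rw [Finset.sum_congr rfl fun x _ => Finset.mul_sum Finset.univ _ (oppWeight P x)]
    exact Finset.sum_comm
  have hcardcast : ((Fintype.card (Fin (n+1)) : ℝ) - 1) = (n:ℝ) := by
    simp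
  have hj : ∀ j : Fin (n+1),
      ∑ x : Fin (n+1) → Fin (n+1) → Bool, oppWeight P x * exp (lam * (indeg x j : ℝ))
        ≤ exp (lam * MU + (n:ℝ) * lam^2/4) := by
    intro j
    have h := moment_bound P hP0 hP1 hlam0.le hlam32 j
    rw [hcardcast] at h
    refine h.trans (exp_le_exp.2 ?_)
    have := hjstar j
    have h2 := mul_le_mul_of_nonneg_left this hlam0.le
    linarith
  have hchain : exp (lam * ED) ≤ ((n:ℝ)+1) * exp (lam * MU + (n:ℝ) * lam^2/4) := by
    calc exp (lam * ED) ≤ ∑ x : Fin (n+1) → Fin (n+1) → Bool,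
        oppWeight P x * exp (lam * (maxdeg x : ℝ)) := hjen
      _ ≤ ∑ x : Fin (n+1) → Fin (n+1) → Bool,
          oppWeight P x * (∑ j : Fin (n+1), exp (lam * (indeg x j : ℝ))) :=
        Finset.sum_le_sum fun x _ => mul_le_mul_of_nonneg_left (hpoint x) (hw0 x)
      _ = ∑ j : Fin (n+1), ∑ x : Fin (n+1) → Fin (n+1) → Bool,
          oppWeight P x * exp (lam * (indeg x j : ℝ)) := hswap
      _ ≤ ∑ _j : Fin (n+1), exp (lam * MU + (n:ℝ) * lam^2/4) :=
        Finset.sum_le_sum fun j _ => hj j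
      _ = ((n:ℝ)+1) * exp (lam * MU + (n:ℝ) * lam^2/4) := by
        rw [Finset.sum_const, Finset.card_univ, Fintype.card_fin, nsmul_eq_mul]
        push_cast
        ring
  have hexpL : exp L = (n:ℝ)+1 := Real.exp_log (by linarith)
  have hloged : lam * ED ≤ L + (lam * MU + (n:ℝ) * lam^2/4) := by
    have h2 : exp (lam * ED) ≤ exp (L + (lam * MU + (n:ℝ) * lam^2/4)) := by
      rw [Real.exp_add, hexpL]
      exact hchain
    exact exp_le_exp.1 h2
  have hval : L/lam + (n:ℝ)*lam/4 = sn*sL := by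
    rw [hlamdef, ← hsn, ← hsL]
    field_simp
    ring
  have hED : ED ≤ MU + sn*sL := by
    have h3 : lam * (ED - MU) ≤ lam * (L/lam + (n:ℝ)*lam/4) := by
      have : lam * (L/lam + (n:ℝ)*lam/4) = L + (n:ℝ)*lam^2/4 := by
        field_simp
      rw [this]
      linarith
    have h4 := le_of_mul_le_mul_left h3 hlam0
    linarith [hval ▸ h4]
  have hlogn0 : (0:ℝ) ≤ (n:ℝ) * Real.log n := by
    have : (0:ℝ) ≤ Real.log n := Real.log_nonneg (by linarith)
    positivity
  have hfinal : sn * sL ≤ Real.sqrt ((n:ℝ) * Real.log n) + 1 := by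
    have h1 : sn * sL = Real.sqrt ((n:ℝ) * L) := (Real.sqrt_mul hn0.le L).symm
    have h2 : (n:ℝ) * L ≤ (n:ℝ) * Real.log n + 1 := loglemma2 n hn
    have h3 : Real.sqrt ((n:ℝ)*L) ≤ Real.sqrt ((n:ℝ) * Real.log n + 1) := Real.sqrt_le_sqrt h2
    have h4 : Real.sqrt ((n:ℝ) * Real.log n + 1) ≤ Real.sqrt ((n:ℝ) * Real.log n) + 1 := by
      apply le_of_pow_le_pow_left₀ two_ne_zero (by positivity)
      rw [Real.sq_sqrt (by linarith)]
      nlinarith [Real.sq_sqrt hlogn0, Real.sqrt_nonneg ((n:ℝ) * Real.log n)]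
    rw [h1]
    linarith
  have part1 : ED ≤ MU + 3 + Real.sqrt ((n:ℝ) * Real.log n) := by linarith
  refine ⟨part1, ?_⟩
  have hsplit : ∑ x : Fin (n + 1) → Fin (n + 1) → Bool,
      oppWeight P x * ((maxdeg x : ℝ) - (indeg x jstar : ℝ)) = ED - MU := by
    rw [hEDdef, hMUdef, ← Finset.sum_sub_distrib]
    exact Finset.sum_congr rfl fun x _ => by ring
  rw [hsplit]
  linarith
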